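/- In the Bargmann realization of osp(1|2), the Casimir operator Q̃ = (Ã₊Ã₋ − (Ã₀ − 1/2))P̃ commutes with Ã₀, Ã₊, Ã₋ and P̃ on the space of complex polynomials. -/
import Mathlib


open Polynomial

/-- Bargmann realization: `Ã₀ f = z f' + (μ + 1/2) f`. -/
noncomputable def oA0 (μ : ℝ) (f : Polynomial ℂ) : Polynomial ℂ :=
  X * derivative f + C ((μ : ℂ) + 1 / 2) * f

/-- Bargmann realization: `Ã₊ f = z f`. -/
noncomputable def oAp (f : Polynomial ℂ) : Polynomial ℂ := X * f

/-- Bargmann realization: `Ã₋ f = f' + (μ/z)(f(z) − f(−z))`. -/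
noncomputable def oAm (μ : ℝ) (f : Polynomial ℂ) : Polynomial ℂ :=
  derivative f + C (μ : ℂ) * ((f - f.comp (-X)) /ₘ X)

/-- Bargmann realization: `P̃ f (z) = ε f(−z)`. -/
noncomputable def oP (ε : ℝ) (f : Polynomial ℂ) : Polynomial ℂ :=
  C (ε : ℂ) * f.comp (-X)

/-- Casimir operator `Q̃ = (Ã₊Ã₋ − (Ã₀ − 1/2))P̃`. -/
noncomputable def oQ (μ ε : ℝ) (f : Polynomial ℂ) : Polynomial ℂ :=
  oAp (oAm μ (oP ε f)) - oA0 μ (oP ε f) + C (1 / 2 : ℂ) * oP ε f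

lemma my_divByMonic_X (p : Polynomial ℂ) (h : p.coeff 0 = 0) : p /ₘ X = p.divX := by
  conv_lhs => rw [← p.divX_mul_X_add, h, map_zero, add_zero, mul_comm]
  exact mul_divByMonic_cancel_left _ monic_X

lemma my_coeff0 (f : Polynomial ℂ) : (f - f.comp (-X)).coeff 0 = 0 := by
  simp [coeff_zero_eq_eval_zero, eval_comp]

lemma oAm_eq (μ : ℝ) (f : Polynomial ℂ) :
    oAm μ f = derivative f + C (μ : ℂ) * (f - f.comp (-X)).divX := by
  rw [oAm, my_divByMonic_X _ (my_coeff0 f)]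

lemma oAm_add (μ : ℝ) (f g : Polynomial ℂ) :
    oAm μ (f + g) = oAm μ f + oAm μ g := by
  simp only [oAm_eq, derivative_add, add_comp]
  rw [show f + g - (f.comp (-X) + g.comp (-X)) =
    (f - f.comp (-X)) + (g - g.comp (-X)) by ring, divX_add]
  ring

lemma oAm_C_mul (μ : ℝ) (c : ℂ) (f : Polynomial ℂ) :
    oAm μ (C c * f) = C c * oAm μ f := by
  simp only [oAm_eq, derivative_C_mul, mul_comp, C_comp]
  rw [show C c * f - C c * f.comp (-X) = C c * (f - f.comp (-X)) by ring, divX_C_mul]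
  ring

lemma oA0_add (μ : ℝ) (f g : Polynomial ℂ) : oA0 μ (f + g) = oA0 μ f + oA0 μ g := by
  simp only [oA0, derivative_add]; ring

lemma oAp_add (f g : Polynomial ℂ) : oAp (f + g) = oAp f + oAp g := by
  simp only [oAp]; ring

lemma oP_add (ε : ℝ) (f g : Polynomial ℂ) : oP ε (f + g) = oP ε f + oP ε g := by
  simp only [oP, add_comp]; ring

lemma oQ_add (μ ε : ℝ) (f g : Polynomial ℂ) :
    oQ μ ε (f + g) = oQ μ ε f + oQ μ ε g := by
  rw [oQ, oP_add, oAm_add, oAp_add, oA0_add, oQ, oQ]; ring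

lemma oQ_C_mul (μ ε : ℝ) (c : ℂ) (f : Polynomial ℂ) :
    oQ μ ε (C c * f) = C c * oQ μ ε f := by
  rw [oQ, show oP ε (C c * f) = C c * oP ε f by simp only [oP, mul_comp, C_comp]; ring,
    oAm_C_mul, show oAp (C c * oAm μ (oP ε f)) = C c * oAp (oAm μ (oP ε f)) by
      simp only [oAp]; ring,
    show oA0 μ (C c * oP ε f) = C c * oA0 μ (oP ε f) by
      simp only [oA0, derivative_C_mul]; ring, oQ]
  ring

set_option maxRecDepth 4000 in
lemma oQ_X_pow (μ ε : ℝ) (n : ℕ) :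
    oQ μ ε (X ^ n) = C (-(ε : ℂ) * μ) * X ^ n := by
  have hc : ((X:Polynomial ℂ) ^ n).comp (-X) = C ((-1:ℂ)^n) * X ^ n := by
    rw [pow_comp, X_comp, neg_pow,
      show ((-1 : Polynomial ℂ))^n = C ((-1:ℂ)^n) by rw [map_pow, map_neg, map_one]]
  cases n with
  | zero =>
    have h1 : oP ε ((X:Polynomial ℂ)^0) = C (ε:ℂ) := by
      rw [pow_zero, oP, one_comp, mul_one]
    have h2 : oAm μ (C (ε:ℂ)) = 0 := by
      rw [oAm_eq, C_comp, sub_self, divX_zero, mul_zero, derivative_C, add_zero]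
    rw [oQ, h1, h2, oAp, mul_zero, oA0, derivative_C, mul_zero, zero_add, zero_sub,
      ← C_mul, ← C_mul, ← map_neg C, ← map_add C, pow_zero, mul_one]
    congr 1
    ring
  | succ m =>
    set a : ℂ := (-1:ℂ)^(m+1) with ha_def
    have ha : a * a = 1 := by
      rw [ha_def, ← pow_add]
      exact Even.neg_one_pow ⟨m+1, by ring⟩
    have hg : oP ε ((X:Polynomial ℂ)^(m+1)) = C ((ε:ℂ)*a) * X^(m+1) := by
      rw [oP, hc, ← mul_assoc, ← C_mul]
    have hAm : oAm μ ((X:Polynomial ℂ)^(m+1)) = C ((m+1 : ℂ) + μ*(1 - a)) * X^m := by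
      rw [oAm_eq, hc, show (X:Polynomial ℂ)^(m+1) - C a * X^(m+1)
          = C (1 - a) * X^(m+1) by rw [map_sub, sub_mul, map_one, one_mul],
        divX_C_mul, divX_X_pow]
      simp only [Nat.succ_ne_zero, if_false, Nat.add_sub_cancel, derivative_X_pow]
      push_cast
      simp only [map_add, map_mul, map_one, map_natCast]
      ring
    have key : (-(ε:ℂ)*μ) = (ε*a) * ((m+1:ℂ)+μ*(1-a))
        - (ε*a)*((m+1:ℂ)+(μ+1/2)) + (ε*a)*(1/2) := by
      linear_combination ((ε:ℂ)*μ) * ha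
    rw [oQ, hg, oAm_C_mul, hAm, oAp, oA0, derivative_C_mul, derivative_X_pow]
    conv_rhs => rw [key]
    push_cast
    simp only [map_add, map_sub, map_mul, map_one, map_ofNat, map_div₀]
    ring

lemma oQ_eq (μ ε : ℝ) (f : Polynomial ℂ) :
    oQ μ ε f = C (-(ε : ℂ) * μ) * f := by
  induction f using Polynomial.induction_on' with
  | add p q hp hq => rw [oQ_add, hp, hq]; ring
  | monomial n a =>
    rw [← C_mul_X_pow_eq_monomial, oQ_C_mul, oQ_X_pow]; ring

lemma oA0_C_mul (μ : ℝ) (c : ℂ) (f : Polynomial ℂ) :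
    oA0 μ (C c * f) = C c * oA0 μ f := by
  simp only [oA0, derivative_C_mul]; ring

lemma oAp_C_mul (c : ℂ) (f : Polynomial ℂ) : oAp (C c * f) = C c * oAp f := by
  simp only [oAp]; ring

lemma oP_C_mul (ε : ℝ) (c : ℂ) (f : Polynomial ℂ) : oP ε (C c * f) = C c * oP ε f := by
  simp only [oP, mul_comp, C_comp]; ring

theorem stmt_17 (μ ε : ℝ) (hε : ε = 1 ∨ ε = -1) (f : Polynomial ℂ) :
    oQ μ ε (oA0 μ f) = oA0 μ (oQ μ ε f) ∧
    oQ μ ε (oAp f) = oAp (oQ μ ε f) ∧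
    oQ μ ε (oAm μ f) = oAm μ (oQ μ ε f) ∧
    oQ μ ε (oP ε f) = oP ε (oQ μ ε f) := by
  refine ⟨?_, ?_, ?_, ?_⟩ <;>
    rw [oQ_eq, oQ_eq]
  · rw [oA0_C_mul]
  · rw [oAp_C_mul]
  · rw [oAm_C_mul]
  · rw [oP_C_mul]
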